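/- As formal power series in q, the sum over partitions π = (λ_1 ≥ λ_2 ≥ ... ≥ λ_ν) with difference between consecutive parts at least 2, of the weight ω(π) = λ_ν · ∏_{i=1}^{ν-1}(λ_i - λ_{i+1} - 1) times q^{|π|}, equals the sum over all partitions π of q^{|π|}, i.e., equals ∏_{k≥1} 1/(1-q^k); the weight of the empty partition is 1. -/

import Mathlib

open scoped Classical

/-- Alladi's weight `ω(π) = λ_ν ⬝ ∏ (λ_i - λ_{i+1} - 1)` on the list of parts
written in non-increasing order. -/
def alladiWeight : List ℕ → ℕ
  | [] => 1
  | [x] => x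
  | x :: y :: t => (x - y - 1) * alladiWeight (y :: t)

/-- ambient finset of strictly decreasing lists with entries ≤ N -/
def DecF (N : ℕ) : Finset (List ℕ) := ((List.range (N+1)).reverse.sublists).toFinset

lemma mem_DecF {N : ℕ} {l : List ℕ} :
    l ∈ DecF N ↔ l.Pairwise (· > ·) ∧ ∀ x ∈ l, x ≤ N := by
  have hrev : ((List.range (N+1)).reverse).Pairwise (· > ·) := by
    rw [List.pairwise_reverse]
    exact List.pairwise_lt_range
  constructor
  · intro h
    rw [DecF, List.mem_toFinset, List.mem_sublists] at h
    refine ⟨hrev.sublist h, fun x hx => ?_⟩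
    have := h.subset hx
    simp only [List.mem_reverse, List.mem_range] at this
    omega
  · rintro ⟨h1, h2⟩
    rw [DecF, List.mem_toFinset, List.mem_sublists]
    have : IsAntisymm ℕ (· > ·) := ⟨fun a b h1 h2 => by omega⟩
    refine List.sublist_of_subperm_of_pairwise ?_ h1 hrev
    have hnd : l.Nodup := h1.imp (fun h => Nat.ne_of_gt h)
    refine List.Nodup.subperm hnd ?_
    intro x hx
    simp only [List.mem_reverse, List.mem_range]
    exact Nat.lt_succ_of_le (h2 x hx)

/-- Frobenius symbols of `m` with arm entries `< A`, leg entries `< B`. -/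
def Frob (m A B : ℕ) : Finset (List ℕ × List ℕ) :=
  ((DecF m) ×ˢ (DecF m)).filter (fun p => p.1.length = p.2.length ∧
    p.1.sum + p.2.sum + p.1.length = m ∧ (∀ z ∈ p.1, z < A) ∧ (∀ z ∈ p.2, z < B))

lemma mem_Frob {m A B : ℕ} {p : List ℕ × List ℕ} :
    p ∈ Frob m A B ↔ p.1.Pairwise (· > ·) ∧ p.2.Pairwise (· > ·) ∧
      p.1.length = p.2.length ∧ p.1.sum + p.2.sum + p.1.length = m ∧
      (∀ z ∈ p.1, z < A) ∧ (∀ z ∈ p.2, z < B) := by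
  constructor
  · intro h
    rw [Frob, Finset.mem_filter, Finset.mem_product, mem_DecF, mem_DecF] at h
    tauto
  · intro h
    rw [Frob, Finset.mem_filter, Finset.mem_product, mem_DecF, mem_DecF]
    obtain ⟨h1, h2, h3, h4, h5, h6⟩ := h
    refine ⟨⟨⟨h1, ?_⟩, ⟨h2, ?_⟩⟩, h3, h4, h5, h6⟩
    · intro x hx
      calc x ≤ p.1.sum := List.single_le_sum (fun y _ => Nat.zero_le y) x hx
        _ ≤ m := by omega
    · intro x hx
      calc x ≤ p.2.sum := List.single_le_sum (fun y _ => Nat.zero_le y) x hx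
        _ ≤ m := by omega

/-- Frobenius pairs with prescribed hook list `l`. -/
def Fib (l : List ℕ) (A B : ℕ) : Finset (List ℕ × List ℕ) :=
  ((DecF l.sum) ×ˢ (DecF l.sum)).filter (fun p => p.1.length = l.length ∧
    p.2.length = l.length ∧ List.zipWith (fun u v => u + v + 1) p.1 p.2 = l ∧
    (∀ z ∈ p.1, z < A) ∧ (∀ z ∈ p.2, z < B))

lemma zipWith_sum (a b : List ℕ) (h : a.length = b.length) :
    (List.zipWith (fun u v => u + v + 1) a b).sum = a.sum + b.sum + a.length := by
  induction a generalizing b with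
  | nil => cases b <;> simp_all
  | cons x xs ih =>
    cases b with
    | nil => simp at h
    | cons y ys =>
      simp only [List.length_cons, Nat.succ.injEq] at h
      simp [List.zipWith_cons_cons, ih ys h]
      omega

lemma mem_Fib {l : List ℕ} {A B : ℕ} {p : List ℕ × List ℕ} :
    p ∈ Fib l A B ↔ p.1.Pairwise (· > ·) ∧ p.2.Pairwise (· > ·) ∧
      p.1.length = l.length ∧ p.2.length = l.length ∧
      List.zipWith (fun u v => u + v + 1) p.1 p.2 = l ∧
      (∀ z ∈ p.1, z < A) ∧ (∀ z ∈ p.2, z < B) := by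
  constructor
  · intro h
    rw [Fib, Finset.mem_filter, Finset.mem_product, mem_DecF, mem_DecF] at h
    tauto
  · intro h
    rw [Fib, Finset.mem_filter, Finset.mem_product, mem_DecF, mem_DecF]
    obtain ⟨h1, h2, h3, h4, h5, h6, h7⟩ := h
    have hsum : l.sum = p.1.sum + p.2.sum + p.1.length := by
      rw [← h5, zipWith_sum _ _ (h3.trans h4.symm)]
    refine ⟨⟨⟨h1, ?_⟩, ⟨h2, ?_⟩⟩, h3, h4, h5, h6, h7⟩
    · intro x hx
      calc x ≤ p.1.sum := List.single_le_sum (fun y _ => Nat.zero_le y) x hx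
        _ ≤ l.sum := by omega
    · intro x hx
      calc x ≤ p.2.sum := List.single_le_sum (fun y _ => Nat.zero_le y) x hx
        _ ≤ l.sum := by omega

def Pb (m A B : ℕ) : ℕ := (Finset.univ.filter (fun π : Nat.Partition m =>
    (∀ x ∈ π.parts, x ≤ A) ∧ Multiset.card π.parts ≤ B)).card

noncomputable def RRL (m : ℕ) : Finset (List ℕ) :=
  (DecF m).filter (fun l => l.Chain' (fun a b => b + 2 ≤ a) ∧ (∀ x ∈ l, 0 < x) ∧ l.sum = m)

lemma mem_RRL {m : ℕ} {l : List ℕ} :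
    l ∈ RRL m ↔ l.Chain' (fun a b => b + 2 ≤ a) ∧ (∀ x ∈ l, 0 < x) ∧ l.sum = m := by
  constructor
  · intro h; rw [RRL, Finset.mem_filter] at h; tauto
  · intro ⟨h1, h2, h3⟩
    rw [RRL, Finset.mem_filter, mem_DecF]
    refine ⟨⟨?_, fun x hx => h3 ▸ List.single_le_sum (fun y _ => Nat.zero_le y) x hx⟩, h1, h2, h3⟩
    have : l.Chain' (· > ·) := List.IsChain.imp (fun {a b} h => by omega) h1
    exact List.isChain_iff_pairwise.mp this

lemma frob_cons_mem {a1 b1 : ℕ} {as bs : List ℕ} :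
    (a1 :: as, b1 :: bs) ∈ Frob m A B ↔
      (∀ z ∈ as, z < a1) ∧ (∀ z ∈ bs, z < b1) ∧ as.Pairwise (· > ·) ∧ bs.Pairwise (· > ·) ∧
      as.length = bs.length ∧ a1 + b1 + 1 + (as.sum + bs.sum + as.length) = m ∧
      a1 < A ∧ (∀ z ∈ as, z < A) ∧ b1 < B ∧ (∀ z ∈ bs, z < B) := by
  rw [mem_Frob]
  simp only [List.pairwise_cons, List.mem_cons, List.length_cons, List.sum_cons,
    forall_eq_or_imp]
  constructor
  · rintro ⟨⟨h1, h1'⟩, ⟨h2, h2'⟩, h3, h4, ⟨h5, h5'⟩, h6, h6'⟩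
    exact ⟨fun z hz => h1 z hz, fun z hz => h2 z hz, h1', h2', by omega, by omega, h5, h5', h6, h6'⟩
  · rintro ⟨h1, h2, h3, h4, h5, h6, h7, h8, h9, h10⟩
    exact ⟨⟨fun z hz => h1 z hz, h3⟩, ⟨fun z hz => h2 z hz, h4⟩, by omega, by omega, ⟨h7, h8⟩, h9, h10⟩

lemma frob_ne_nil (hm : 0 < m) {p : List ℕ × List ℕ} (hp : p ∈ Frob m A B) :
    ∃ a1 as b1 bs, p = (a1 :: as, b1 :: bs) := by
  rw [mem_Frob] at hp
  obtain ⟨-, -, hlen, hsum, -, -⟩ := hp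
  obtain ⟨p1, p2⟩ := p
  cases p1 with
  | nil =>
    exfalso
    simp only [List.length_nil, List.sum_nil] at hlen hsum
    have : p2 = [] := by rw [← List.length_eq_zero_iff]; omega
    subst this
    simp at hsum; omega
  | cons a1 as =>
    cases p2 with
    | nil => simp at hlen
    | cons b1 bs => exact ⟨a1, as, b1, bs, rfl⟩

lemma frob_rec (hm : 0 < m) :
    (Frob m A B).card = ∑ x ∈ Finset.range A, ∑ y ∈ Finset.range B,
      if x + y + 1 ≤ m then (Frob (m-1-x-y) x y).card else 0 := by
  rw [Finset.card_eq_sum_card_fiberwise (f := fun p => (p.1.headI, p.2.headI))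
      (t := Finset.range A ×ˢ Finset.range B) ?_]
  swap
  · intro p hp
    simp only [Finset.mem_coe] at hp ⊢
    obtain ⟨a1, as, b1, bs, rfl⟩ := frob_ne_nil hm hp
    rw [frob_cons_mem] at hp
    simp only [List.headI_cons, Finset.mem_product, Finset.mem_range]
    exact ⟨hp.2.2.2.2.2.2.1, hp.2.2.2.2.2.2.2.2.1⟩
  rw [Finset.sum_product]
  refine Finset.sum_congr rfl (fun x hx => Finset.sum_congr rfl (fun y hy => ?_))
  by_cases hxy : x + y + 1 ≤ m
  · rw [if_pos hxy]
    refine Finset.card_bij' (fun p _ => (p.1.tail, p.2.tail))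
      (fun q _ => (x :: q.1, y :: q.2)) ?_ ?_ ?_ ?_
    · intro p hp
      rw [Finset.mem_filter] at hp
      obtain ⟨hpF, hh⟩ := hp
      obtain ⟨a1, as, b1, bs, rfl⟩ := frob_ne_nil hm hpF
      simp only [List.headI_cons, Prod.mk.injEq] at hh
      obtain ⟨rfl, rfl⟩ := hh
      rw [frob_cons_mem] at hpF
      show (as, bs) ∈ Frob _ _ _
      rw [mem_Frob]
      simp only
      obtain ⟨h1, h2, h3, h4, h5, h6, h7, h8, h9, h10⟩ := hpF
      exact ⟨h3, h4, h5, by omega, h1, h2⟩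
    · intro q hq
      rw [mem_Frob] at hq
      obtain ⟨h1, h2, h3, h4, h5, h6⟩ := hq
      rw [Finset.mem_filter]
      constructor
      · rw [frob_cons_mem]
        refine ⟨h5, h6, h1, h2, h3, by omega, ?_, ?_, ?_, ?_⟩
        · simp at hx; omega
        · intro z hz; have := h5 z hz; simp at hx; omega
        · simp at hy; omega
        · intro z hz; have := h6 z hz; simp at hy; omega
      · simp
    · intro p hp
      rw [Finset.mem_filter] at hp
      obtain ⟨hpF, hh⟩ := hp
      obtain ⟨a1, as, b1, bs, rfl⟩ := frob_ne_nil hm hpF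
      simp only [List.headI_cons, Prod.mk.injEq] at hh
      obtain ⟨rfl, rfl⟩ := hh
      simp
    · intro q hq
      simp
  · rw [if_neg hxy]
    rw [Finset.card_eq_zero, Finset.filter_eq_empty_iff]
    intro p hp
    obtain ⟨a1, as, b1, bs, rfl⟩ := frob_ne_nil hm hp
    rw [frob_cons_mem] at hp
    simp only [List.headI_cons, Prod.mk.injEq]
    rintro ⟨rfl, rfl⟩
    omega

lemma frob_zero : (Frob 0 A B) = {([], [])} := by
  ext p
  rw [mem_Frob, Finset.mem_singleton]
  constructor
  · rintro ⟨-, -, hlen, hsum, -, -⟩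
    obtain ⟨p1, p2⟩ := p
    simp only at *
    have h1 : p1.length = 0 := by omega
    have h2 : p2.length = 0 := by omega
    rw [List.length_eq_zero_iff] at h1 h2
    simp [h1, h2, Prod.ext_iff]
  · rintro rfl
    simp



lemma fib_nil : Fib [] A B = {([], [])} := by
  ext p
  rw [mem_Fib, Finset.mem_singleton]
  constructor
  · rintro ⟨-, -, h3, h4, -, -, -⟩
    obtain ⟨p1, p2⟩ := p
    simp only [List.length_nil] at h3 h4
    rw [List.length_eq_zero_iff] at h3 h4
    simp [h3, h4, Prod.ext_iff]
  · rintro rfl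
    simp

lemma fib_cons_mem {h a1 b1 : ℕ} {t as bs : List ℕ} :
    (a1 :: as, b1 :: bs) ∈ Fib (h :: t) A B ↔
      (∀ z ∈ as, z < a1) ∧ (∀ z ∈ bs, z < b1) ∧ as.Pairwise (· > ·) ∧ bs.Pairwise (· > ·) ∧
      as.length = t.length ∧ bs.length = t.length ∧
      List.zipWith (fun u v => u + v + 1) as bs = t ∧ a1 + b1 + 1 = h ∧
      a1 < A ∧ (∀ z ∈ as, z < A) ∧ b1 < B ∧ (∀ z ∈ bs, z < B) := by
  rw [mem_Fib]
  simp only [List.pairwise_cons, List.mem_cons, List.length_cons, Nat.succ.injEq,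
    List.zipWith_cons_cons, List.cons.injEq, forall_eq_or_imp]
  constructor
  · rintro ⟨⟨h1, h1'⟩, ⟨h2, h2'⟩, h3, h4, ⟨h5, h5'⟩, ⟨h6, h6'⟩, h7, h7'⟩
    exact ⟨fun z hz => h1 z hz, fun z hz => h2 z hz, h1', h2', h3, h4, h5', h5, h6, h6', h7, h7'⟩
  · rintro ⟨h1, h2, h3, h4, h5, h6, h7, h8, h9, h10, h11, h12⟩
    exact ⟨⟨fun z hz => h1 z hz, h3⟩, ⟨fun z hz => h2 z hz, h4⟩, h5, h6, ⟨h8, h7⟩, ⟨h9, h10⟩, h11, h12⟩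

lemma fib_ne_nil {h : ℕ} {t : List ℕ} {p : List ℕ × List ℕ} (hp : p ∈ Fib (h :: t) A B) :
    ∃ a1 as b1 bs, p = (a1 :: as, b1 :: bs) := by
  rw [mem_Fib] at hp
  obtain ⟨-, -, h3, h4, -, -, -⟩ := hp
  obtain ⟨p1, p2⟩ := p
  cases p1 with
  | nil => simp at h3
  | cons a1 as =>
    cases p2 with
    | nil => simp at h4
    | cons b1 bs => exact ⟨a1, as, b1, bs, rfl⟩

lemma fib_peel {h : ℕ} (t : List ℕ) (hh : 0 < h) (A B : ℕ) :
    (Fib (h :: t) A B).card = ∑ j ∈ Finset.range h,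
      if j < A ∧ h - 1 - j < B then (Fib t j (h-1-j)).card else 0 := by
  rw [Finset.card_eq_sum_card_fiberwise (f := fun p => p.1.headI)
      (t := Finset.range h) ?_]
  swap
  · intro p hp
    simp only [Finset.mem_coe] at hp ⊢
    obtain ⟨a1, as, b1, bs, rfl⟩ := fib_ne_nil hp
    rw [fib_cons_mem] at hp
    simp only [List.headI_cons, Finset.mem_range]
    omega
  refine Finset.sum_congr rfl (fun j hj => ?_)
  simp only [Finset.mem_range] at hj
  by_cases hc : j < A ∧ h - 1 - j < B
  · rw [if_pos hc]
    refine Finset.card_bij' (fun p _ => (p.1.tail, p.2.tail))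
      (fun q _ => (j :: q.1, (h-1-j) :: q.2)) ?_ ?_ ?_ ?_
    · intro p hp
      rw [Finset.mem_filter] at hp
      obtain ⟨hpF, hhd⟩ := hp
      obtain ⟨a1, as, b1, bs, rfl⟩ := fib_ne_nil hpF
      simp only [List.headI_cons] at hhd
      subst hhd
      rw [fib_cons_mem] at hpF
      show (as, bs) ∈ Fib _ _ _
      rw [mem_Fib]
      simp only
      obtain ⟨h1, h2, h3, h4, h5, h6, h7, h8, h9, h10, h11, h12⟩ := hpF
      have : b1 = h - 1 - a1 := by omega
      subst this
      exact ⟨h3, h4, h5, h6, h7, h1, h2⟩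
    · intro q hq
      rw [mem_Fib] at hq
      obtain ⟨h1, h2, h3, h4, h5, h6, h7⟩ := hq
      rw [Finset.mem_filter]
      refine ⟨?_, by simp⟩
      rw [fib_cons_mem]
      refine ⟨h6, h7, h1, h2, h3, h4, h5, by omega, hc.1, ?_, hc.2, ?_⟩
      · intro z hz; have := h6 z hz; omega
      · intro z hz; have := h7 z hz; omega
    · intro p hp
      rw [Finset.mem_filter] at hp
      obtain ⟨hpF, hhd⟩ := hp
      obtain ⟨a1, as, b1, bs, rfl⟩ := fib_ne_nil hpF
      simp only [List.headI_cons] at hhd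
      subst hhd
      rw [fib_cons_mem] at hpF
      have : b1 = h - 1 - a1 := by omega
      subst this
      simp
    · intro q hq
      simp
  · rw [if_neg hc]
    rw [Finset.card_eq_zero, Finset.filter_eq_empty_iff]
    intro p hp
    obtain ⟨a1, as, b1, bs, rfl⟩ := fib_ne_nil hp
    rw [fib_cons_mem] at hp
    simp only [List.headI_cons]
    intro hj'
    subst hj'
    omega

lemma fib_D {t : List ℕ} : ∀ {x : ℕ}, 0 < x →
    (x :: t).Chain' (fun a b => b + 2 ≤ a) → (∀ z ∈ t, 0 < z) →
    ∑ j ∈ Finset.range x, (Fib t j (x-1-j)).card = alladiWeight (x :: t) := by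
  induction t with
  | nil =>
    intro x hx _ _
    simp [fib_nil, alladiWeight]
  | cons y t' ih =>
    intro x hx hch hpos
    have hy : 0 < y := hpos y (by simp)
    have hxy : y + 2 ≤ x := (List.isChain_cons_cons.mp hch).1
    have hch' : (y :: t').Chain' (fun a b => b + 2 ≤ a) := (List.isChain_cons_cons.mp hch).2
    calc ∑ j ∈ Finset.range x, (Fib (y :: t') j (x-1-j)).card
        = ∑ j ∈ Finset.range x, ∑ k ∈ Finset.range y,
            if k < j ∧ y - 1 - k < x - 1 - j then (Fib t' k (y-1-k)).card else 0 := by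
          refine Finset.sum_congr rfl (fun j hj => ?_)
          exact fib_peel t' hy j (x-1-j)
      _ = ∑ k ∈ Finset.range y, ∑ j ∈ Finset.range x,
            if k < j ∧ y - 1 - k < x - 1 - j then (Fib t' k (y-1-k)).card else 0 :=
          Finset.sum_comm
      _ = ∑ k ∈ Finset.range y, (x - y - 1) * (Fib t' k (y-1-k)).card := by
          refine Finset.sum_congr rfl (fun k hk => ?_)
          simp only [Finset.mem_range] at hk
          rw [← Finset.sum_filter]
          have hfil : (Finset.range x).filter
              (fun j => k < j ∧ y - 1 - k < x - 1 - j) = Finset.Ioo k (k + (x - y)) := by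
            ext j
            simp only [Finset.mem_filter, Finset.mem_range, Finset.mem_Ioo]
            omega
          rw [hfil, Finset.sum_const, Nat.card_Ioo, smul_eq_mul]
          congr 1
          omega
      _ = (x - y - 1) * ∑ k ∈ Finset.range y, (Fib t' k (y-1-k)).card := by
          rw [Finset.mul_sum]
      _ = (x - y - 1) * alladiWeight (y :: t') := by
          rw [ih hy hch' (fun z hz => hpos z (by simp [hz]))]
      _ = alladiWeight (x :: y :: t') := rfl

lemma fib_card_eq_weight {l : List ℕ} (hch : l.Chain' (fun a b => b + 2 ≤ a))
    (hpos : ∀ z ∈ l, 0 < z) (hA : ∀ z ∈ l, z ≤ A) (hB : ∀ z ∈ l, z ≤ B) :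
    (Fib l A B).card = alladiWeight l := by
  cases l with
  | nil => simp [fib_nil, alladiWeight]
  | cons h t =>
    have hh : 0 < h := hpos h (by simp)
    rw [fib_peel t hh A B]
    have : ∀ j ∈ Finset.range h, (if j < A ∧ h - 1 - j < B then (Fib t j (h-1-j)).card else 0)
        = (Fib t j (h-1-j)).card := by
      intro j hj
      simp only [Finset.mem_range] at hj
      have h1 : h ≤ A := hA h (by simp)
      have h2 : h ≤ B := hB h (by simp)
      rw [if_pos (by omega)]
    rw [Finset.sum_congr rfl this]
    exact fib_D hh hch (fun z hz => hpos z (by simp [hz]))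

lemma msup_mem {s : Multiset ℕ} (hs : s ≠ 0) : s.sup ∈ s := by
  induction s using Multiset.induction_on with
  | empty => simp at hs
  | cons a t ih =>
    rw [Multiset.sup_cons]
    rcases eq_or_ne t 0 with rfl | ht
    · simp
    · rcases le_total a t.sup with h | h
      · rw [sup_eq_right.mpr h]; exact Multiset.mem_cons_of_mem (ih ht)
      · rw [sup_eq_left.mpr h]; exact Multiset.mem_cons_self a t

lemma msum_pred {s : Multiset ℕ} (h : ∀ x ∈ s, 0 < x) :
    (s.map (· - 1)).sum = s.sum - Multiset.card s := by
  induction s using Multiset.induction_on with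
  | empty => simp
  | cons a t ih =>
    have ha : 0 < a := h a (Multiset.mem_cons_self a t)
    have ht : ∀ x ∈ t, 0 < x := fun x hx => h x (Multiset.mem_cons_of_mem hx)
    have hts : Multiset.card t ≤ t.sum := by
      calc Multiset.card t = (Multiset.replicate (Multiset.card t) 1).sum := by
            simp [Multiset.sum_replicate]
        _ ≤ t.sum := by
            rw [← Multiset.map_const' t 1]
            exact Multiset.sum_map_le_sum _ (fun x hx => ht x hx)
    simp only [Multiset.map_cons, Multiset.sum_cons, Multiset.card_cons, ih ht]
    omega

lemma mcard_le_sum {s : Multiset ℕ} (h : ∀ x ∈ s, 0 < x) : Multiset.card s ≤ s.sum := by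
  calc Multiset.card s = (Multiset.replicate (Multiset.card s) 1).sum := by
        simp [Multiset.sum_replicate]
    _ ≤ s.sum := by
        rw [← Multiset.map_const' s 1]
        exact Multiset.sum_map_le_sum _ (fun x hx => h x hx)

lemma msum_succ (s : Multiset ℕ) : (s.map (· + 1)).sum = s.sum + Multiset.card s := by
  induction s using Multiset.induction_on with
  | empty => simp
  | cons a t ih => simp [ih]; omega

lemma mem_le_msum {s : Multiset ℕ} {x : ℕ} (hx : x ∈ s) : x ≤ s.sum := by
  obtain ⟨t, rfl⟩ := Multiset.exists_cons_of_mem hx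
  simp


lemma pb_zero {A B : ℕ} : Pb 0 A B = 1 := by
  rw [Pb]
  rw [Finset.filter_true_of_mem]
  · simp
  · intro π _
    simp [Nat.Partition.partition_zero_parts]

/-- strip the principal hook -/
def hstrip (s : Multiset ℕ) : Multiset ℕ := ((s.erase s.sup).map (· - 1)).filter (0 < ·)

def hjoin (j k : ℕ) (t : Multiset ℕ) : Multiset ℕ :=
  (j+1) ::ₘ (t.map (· + 1) + Multiset.replicate (k - Multiset.card t) 1)

lemma pb_rec {m A B : ℕ} (hm : 0 < m) :
    Pb m A B = ∑ x ∈ Finset.range A, ∑ y ∈ Finset.range B,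
      if x + y + 1 ≤ m then Pb (m-1-x-y) x y else 0 := by
  have hparts : ∀ π : Nat.Partition m, π.parts ≠ 0 := by
    intro π h
    have := π.parts_sum
    rw [h] at this
    simp at this
    omega
  have hsup_pos : ∀ π : Nat.Partition m, 0 < π.parts.sup :=
    fun π => π.parts_pos (msup_mem (hparts π))
  have hcard_pos : ∀ π : Nat.Partition m, 0 < Multiset.card π.parts := by
    intro π
    rw [Multiset.card_pos]
    exact hparts π
  rw [Pb, Finset.card_eq_sum_card_fiberwise
    (f := fun π => (π.parts.sup - 1, Multiset.card π.parts - 1))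
    (t := Finset.range A ×ˢ Finset.range B) ?_]
  swap
  · intro π hπ
    simp only [Finset.mem_coe] at hπ ⊢
    rw [Finset.mem_filter] at hπ
    obtain ⟨-, h1, h2⟩ := hπ
    have := h1 _ (msup_mem (hparts π))
    have := hsup_pos π
    have := hcard_pos π
    simp only [Finset.mem_product, Finset.mem_range]
    omega
  rw [Finset.sum_product]
  refine Finset.sum_congr rfl (fun j hj => Finset.sum_congr rfl (fun k hk => ?_))
  simp only [Finset.mem_range] at hj hk
  -- facts about members of the fiber
  have fiber_facts : ∀ π : Nat.Partition m,
      π ∈ (Finset.univ.filter (fun π : Nat.Partition m =>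
        (∀ x ∈ π.parts, x ≤ A) ∧ Multiset.card π.parts ≤ B)).filter
        (fun π => (π.parts.sup - 1, Multiset.card π.parts - 1) = (j, k)) →
      π.parts.sup = j + 1 ∧ Multiset.card π.parts = k + 1 ∧
        (∀ x ∈ π.parts, x ≤ A) ∧ Multiset.card π.parts ≤ B := by
    intro π hπ
    simp only [Finset.mem_filter, Finset.mem_univ, true_and, Prod.mk.injEq,
      Nat.pred_eq_sub_one] at hπ
    obtain ⟨⟨h1, h2⟩, h3, h4⟩ := hπ
    have := hsup_pos π
    have := hcard_pos π
    refine ⟨by omega, by omega, h1, h2⟩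
  by_cases hjk : j + k + 1 ≤ m
  · rw [if_pos hjk]
    have herase : ∀ π : Nat.Partition m, π.parts.sup = j + 1 →
        (π.parts.erase π.parts.sup).sum = m - (j+1) ∧
        (∀ x ∈ π.parts.erase π.parts.sup, 0 < x) := by
      intro π hsup
      have hmem : π.parts.sup ∈ π.parts := msup_mem (hparts π)
      have hsum : π.parts.sum = m := π.parts_sum
      have : π.parts.sup + (π.parts.erase π.parts.sup).sum = m := by
        have h := Multiset.cons_erase hmem
        have h2 : (π.parts.sup ::ₘ π.parts.erase π.parts.sup).sum = m := by rw [h, hsum]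
        simpa using h2
      constructor
      · omega
      · intro x hx
        exact π.parts_pos (Multiset.mem_of_mem_erase hx)
    -- the stripped partition
    have strip_mem : ∀ π : Nat.Partition m, π.parts.sup = j + 1 →
        Multiset.card π.parts = k + 1 →
        (∀ x ∈ hstrip π.parts, 0 < x) ∧ (hstrip π.parts).sum = m - 1 - j - k ∧
        (∀ x ∈ hstrip π.parts, x ≤ j) ∧ Multiset.card (hstrip π.parts) ≤ k := by
      intro π hsup hcard
      obtain ⟨hesum, hepos⟩ := herase π hsup
      have hecard : Multiset.card (π.parts.erase π.parts.sup) = k := by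
        rw [Multiset.card_erase_of_mem (msup_mem (hparts π)), Nat.pred_eq_sub_one]
        omega
      refine ⟨fun x hx => (Multiset.mem_filter.mp hx).2, ?_, ?_, ?_⟩
      · rw [hstrip]
        have hfil : (((π.parts.erase π.parts.sup).map (· - 1)).filter (0 < ·)).sum
            = ((π.parts.erase π.parts.sup).map (· - 1)).sum := by
          conv_rhs => rw [← Multiset.filter_add_not (0 < ·) ((π.parts.erase π.parts.sup).map (· - 1))]
          rw [Multiset.sum_add]
          have : (((π.parts.erase π.parts.sup).map (· - 1)).filter (fun a => ¬ 0 < a)).sum = 0 := by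
            apply Multiset.sum_eq_zero
            intro x hx
            have := (Multiset.mem_filter.mp hx).2
            omega
          omega
        rw [hfil, msum_pred hepos, hesum, hecard]
        omega
      · intro x hx
        obtain ⟨hx1, _⟩ := Multiset.mem_filter.mp hx
        obtain ⟨p, hp, rfl⟩ := Multiset.mem_map.mp hx1
        have : p ≤ π.parts.sup := Multiset.le_sup (Multiset.mem_of_mem_erase hp)
        omega
      · calc Multiset.card (hstrip π.parts)
            ≤ Multiset.card ((π.parts.erase π.parts.sup).map (· - 1)) :=
              Multiset.card_le_card (Multiset.filter_le _ _)
          _ = k := by rw [Multiset.card_map]; exact hecard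
    refine Finset.card_bij'
      (fun π hπ => ⟨hstrip π.parts, ?_, ?_⟩)
      (fun σ hσ => ⟨hjoin j k σ.parts, ?_, ?_⟩)
      ?_ ?_ ?_ ?_
    · obtain ⟨h1, h2, -, -⟩ := fiber_facts π hπ
      exact fun {x} hx => ((strip_mem π h1 h2).1 x hx)
    · obtain ⟨h1, h2, -, -⟩ := fiber_facts π hπ
      exact (strip_mem π h1 h2).2.1
    · -- hjoin parts positive
      intro x hx
      revert hx
      intro hx
      rw [hjoin] at hx
      rcases Multiset.mem_cons.mp hx with rfl | hx
      · omega
      rcases Multiset.mem_add.mp hx with hx | hx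
      · obtain ⟨p, _, rfl⟩ := Multiset.mem_map.mp hx
        omega
      · rw [Multiset.eq_of_mem_replicate hx]
        omega
    · -- hjoin sum
      rw [Finset.mem_filter] at hσ
      obtain ⟨-, -, hcard⟩ := hσ
      have hsum := σ.parts_sum
      rw [hjoin]
      simp only [Multiset.sum_cons, Multiset.sum_add, msum_succ, Multiset.sum_replicate,
        smul_eq_mul, mul_one]
      omega
    · -- strip lands in the target filter
      intro π hπ
      obtain ⟨h1, h2, -, -⟩ := fiber_facts π hπ
      obtain ⟨-, -, h5, h6⟩ := strip_mem π h1 h2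
      simp only [Finset.mem_filter, Finset.mem_univ, true_and]
      exact ⟨h5, h6⟩
    · -- hjoin lands in the fiber
      intro σ hσ
      rw [Finset.mem_filter] at hσ
      obtain ⟨-, hle, hcard⟩ := hσ
      have hsupj : (hjoin j k σ.parts).sup = j + 1 := by
        rw [hjoin, Multiset.sup_cons]
        have : (σ.parts.map (· + 1) + Multiset.replicate (k - Multiset.card σ.parts) 1).sup ≤ j+1 := by
          rw [Multiset.sup_le]
          intro b hb
          rcases Multiset.mem_add.mp hb with hb | hb
          · obtain ⟨p, hp, rfl⟩ := Multiset.mem_map.mp hb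
            have := hle p hp
            omega
          · rw [Multiset.eq_of_mem_replicate hb]
            omega
        exact sup_eq_left.mpr this
      have hcardj : Multiset.card (hjoin j k σ.parts) = k + 1 := by
        rw [hjoin]
        simp only [Multiset.card_cons, Multiset.card_add, Multiset.card_map,
          Multiset.card_replicate]
        omega
      simp only [Finset.mem_filter, Finset.mem_univ, true_and, Prod.mk.injEq]
      refine ⟨⟨?_, ?_⟩, ?_, ?_⟩
      · intro x hx
        simp only [hjoin] at hx
        rcases Multiset.mem_cons.mp hx with rfl | hx
        · omega
        rcases Multiset.mem_add.mp hx with hx | hx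
        · obtain ⟨p, hp, rfl⟩ := Multiset.mem_map.mp hx
          have := hle p hp
          omega
        · rw [Multiset.eq_of_mem_replicate hx]
          omega
      · simp only [hcardj]; omega
      · simp only [hsupj]; omega
      · simp only [hcardj]; omega
    · -- left inverse : hjoin (hstrip π) = π
      intro π hπ
      obtain ⟨h1, h2, -, -⟩ := fiber_facts π hπ
      apply Nat.Partition.ext
      show hjoin j k (hstrip π.parts) = π.parts
      obtain ⟨hesum, hepos⟩ := herase π h1
      set e := π.parts.erase π.parts.sup with he
      have hecard : Multiset.card e = k := by
        rw [he, Multiset.card_erase_of_mem (msup_mem (hparts π)), Nat.pred_eq_sub_one]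
        omega
      have hstrip_eq : hstrip π.parts = (e.filter (2 ≤ ·)).map (· - 1) := by
        rw [hstrip, Multiset.filter_map]
        congr 1
        apply Multiset.filter_congr
        intro x hx
        constructor
        · intro h; simp only [Function.comp] at h ⊢; omega
        · intro h; simp only [Function.comp] at h ⊢; omega
      have hmapback : (hstrip π.parts).map (· + 1) = e.filter (2 ≤ ·) := by
        rw [hstrip_eq, Multiset.map_map]
        have : ∀ x ∈ e.filter (2 ≤ ·), ((· + 1) ∘ (· - 1)) x = id x := by
          intro x hx
          have := (Multiset.mem_filter.mp hx).2
          simp only [Function.comp, id]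
          omega
        rw [Multiset.map_congr rfl this, Multiset.map_id]
      have hrep : Multiset.replicate (k - Multiset.card (hstrip π.parts)) 1
          = e.filter (fun a => ¬ 2 ≤ a) := by
        have hcards : Multiset.card (e.filter (2 ≤ ·)) + Multiset.card (e.filter (fun a => ¬ 2 ≤ a))
            = k := by
          rw [← Multiset.card_add, Multiset.filter_add_not]
          exact hecard
        have : Multiset.card (hstrip π.parts) = Multiset.card (e.filter (2 ≤ ·)) := by
          rw [hstrip_eq, Multiset.card_map]
        rw [this]
        symm
        rw [Multiset.eq_replicate]
        constructor
        · omega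
        · intro b hb
          obtain ⟨hb1, hb2⟩ := Multiset.mem_filter.mp hb
          have := hepos b hb1
          omega
      rw [hjoin, hmapback, hrep, Multiset.filter_add_not]
      rw [← h1, he]
      exact Multiset.cons_erase (msup_mem (hparts π))
    · -- right inverse : hstrip (hjoin σ) = σ
      intro σ hσ
      rw [Finset.mem_filter] at hσ
      obtain ⟨-, hle, hcard⟩ := hσ
      apply Nat.Partition.ext
      show hstrip (hjoin j k σ.parts) = σ.parts
      have hsupj : (hjoin j k σ.parts).sup = j + 1 := by
        rw [hjoin, Multiset.sup_cons]
        have : (σ.parts.map (· + 1) + Multiset.replicate (k - Multiset.card σ.parts) 1).sup ≤ j+1 := by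
          rw [Multiset.sup_le]
          intro b hb
          rcases Multiset.mem_add.mp hb with hb | hb
          · obtain ⟨p, hp, rfl⟩ := Multiset.mem_map.mp hb
            have := hle p hp
            omega
          · rw [Multiset.eq_of_mem_replicate hb]
            omega
        exact sup_eq_left.mpr this
      rw [hstrip, hsupj, hjoin, Multiset.erase_cons_head]
      rw [Multiset.map_add, Multiset.map_map, Multiset.map_replicate]
      have h1 : σ.parts.map ((· - 1) ∘ (· + 1)) = σ.parts := by
        have : ∀ x ∈ σ.parts, ((· - 1) ∘ (· + 1)) x = id x := by
          intro x hx
          simp only [Function.comp, id]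
          omega
        rw [Multiset.map_congr rfl this, Multiset.map_id]
      rw [h1]
      show (σ.parts + Multiset.replicate (k - Multiset.card σ.parts) (1-1)).filter (0 < ·) = σ.parts
      rw [Multiset.filter_add]
      have h2 : σ.parts.filter (0 < ·) = σ.parts :=
        Multiset.filter_eq_self.mpr (fun x hx => σ.parts_pos hx)
      have h3 : (Multiset.replicate (k - Multiset.card σ.parts) (1-1)).filter (0 < ·) = 0 := by
        apply Multiset.filter_eq_nil.mpr
        intro a ha
        rw [Multiset.eq_of_mem_replicate ha]
        omega
      rw [h2, h3, add_zero]
  · rw [if_neg hjk]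
    rw [Finset.card_eq_zero, Finset.filter_eq_empty_iff]
    intro π hπ
    simp only [Prod.mk.injEq, not_and, Nat.pred_eq_sub_one]
    intro h1 h2
    have hs := hsup_pos π
    have hc := hcard_pos π
    have hsup : π.parts.sup = j + 1 := by omega
    have hcard : Multiset.card π.parts = k + 1 := by omega
    have hmem : π.parts.sup ∈ π.parts := msup_mem (hparts π)
    have hsum : π.parts.sup + (π.parts.erase π.parts.sup).sum = m := by
      conv_rhs => rw [← π.parts_sum, ← Multiset.cons_erase hmem]
      simp
    have hecard : Multiset.card (π.parts.erase π.parts.sup) = k := by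
      rw [Multiset.card_erase_of_mem hmem, Nat.pred_eq_sub_one]
      omega
    have : Multiset.card (π.parts.erase π.parts.sup) ≤ (π.parts.erase π.parts.sup).sum :=
      mcard_le_sum (fun x hx => π.parts_pos (Multiset.mem_of_mem_erase hx))
    omega

lemma card_partition_eq_pb (m : ℕ) : Fintype.card (Nat.Partition m) = Pb m m m := by
  rw [Pb, Finset.filter_true_of_mem, Finset.card_univ]
  intro π _
  constructor
  · intro x hx
    calc x ≤ π.parts.sum := mem_le_msum hx
      _ = m := π.parts_sum
  · calc Multiset.card π.parts ≤ π.parts.sum := mcard_le_sum (fun x hx => π.parts_pos hx)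
      _ = m := π.parts_sum

lemma zip_chain {a b : List ℕ} (ha : a.Pairwise (· > ·)) (hb : b.Pairwise (· > ·))
    (h : a.length = b.length) :
    (List.zipWith (fun u v => u + v + 1) a b).Chain' (fun u v => v + 2 ≤ u) := by
  show List.IsChain _ _
  rw [List.isChain_iff_getElem]
  intro i hi
  simp only [List.length_zipWith, h, min_self] at hi
  have hga := List.isChain_iff_getElem.mp ha.isChain
  have hgb := List.isChain_iff_getElem.mp hb.isChain
  have hia : i + 1 < a.length := by
    have := List.length_zipWith (f := fun u v => u + v + 1) (l₁ := a) (l₂ := b)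
    omega
  have hib : i + 1 < b.length := by omega
  have h1 := hga i (by omega)
  have h2 := hgb i (by omega)
  simp only [List.get_eq_getElem, List.getElem_zipWith]
  omega

lemma frob_fiber (m : ℕ) :
    (Frob m m m).card = ∑ l ∈ RRL m, (Fib l m m).card := by
  rw [Finset.card_eq_sum_card_fiberwise
    (f := fun p => List.zipWith (fun u v => u + v + 1) p.1 p.2) (t := RRL m) ?_]
  swap
  · intro p hp
    simp only [Finset.mem_coe] at hp ⊢
    rw [mem_Frob] at hp
    obtain ⟨h1, h2, h3, h4, h5, h6⟩ := hp
    rw [mem_RRL]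
    refine ⟨zip_chain h1 h2 h3, ?_, ?_⟩
    · intro x hx
      rw [List.mem_iff_getElem] at hx
      obtain ⟨i, hi, rfl⟩ := hx
      simp only [List.getElem_zipWith]
      omega
    · rw [zipWith_sum _ _ h3]; exact h4
  refine Finset.sum_congr rfl (fun l hl => ?_)
  congr 1
  rw [mem_RRL] at hl
  obtain ⟨hch, hpos, hsum⟩ := hl
  ext p
  rw [Finset.mem_filter, mem_Frob, mem_Fib]
  constructor
  · rintro ⟨⟨h1, h2, h3, h4, h5, h6⟩, h7⟩
    have hlen : p.1.length = l.length := by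
      rw [← h7, List.length_zipWith]; omega
    exact ⟨h1, h2, hlen, by omega, h7, h5, h6⟩
  · rintro ⟨h1, h2, h3, h4, h5, h6, h7⟩
    have hs : p.1.sum + p.2.sum + p.1.length = m := by
      rw [← zipWith_sum p.1 p.2 (h3.trans h4.symm), h5, hsum]
    exact ⟨⟨h1, h2, h3.trans h4.symm, hs, h6, h7⟩, h5⟩

lemma partition_sum_eq (m : ℕ) :
    ∑ π ∈ Finset.univ.filter (fun π : Nat.Partition m =>
        List.Chain' (fun a b => b + 2 ≤ a) (π.parts.sort (· ≥ ·))),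
      alladiWeight (π.parts.sort (· ≥ ·))
    = ∑ l ∈ RRL m, alladiWeight l := by
  refine Finset.sum_bij (fun π _ => π.parts.sort (· ≥ ·)) ?_ ?_ ?_ ?_
  · intro π hπ
    rw [Finset.mem_filter] at hπ
    rw [mem_RRL]
    refine ⟨hπ.2, ?_, ?_⟩
    · intro x hx
      rw [Multiset.mem_sort] at hx
      exact π.parts_pos hx
    · have h0 : ((π.parts.sort (· ≥ ·) : List ℕ) : Multiset ℕ) = π.parts := Multiset.sort_eq _ _
      exact ((Multiset.sum_coe _).symm.trans (congrArg Multiset.sum h0)).trans π.parts_sum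
  · intro π₁ h₁ π₂ h₂ heq
    apply Nat.Partition.ext
    calc π₁.parts = ((π₁.parts.sort (· ≥ ·) : List ℕ) : Multiset ℕ) := (Multiset.sort_eq _ _).symm
      _ = ((π₂.parts.sort (· ≥ ·) : List ℕ) : Multiset ℕ) := by rw [heq]
      _ = π₂.parts := Multiset.sort_eq _ _
  · intro l hl
    rw [mem_RRL] at hl
    obtain ⟨hch, hpos, hsum⟩ := hl
    have hlsum : (l : Multiset ℕ).sum = m := by rwa [Multiset.sum_coe]
    have hsorted : ((l : Multiset ℕ).sort (· ≥ ·)) = l := by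
      haveI : IsAntisymm ℕ (· ≥ ·) := ⟨fun a b h1 h2 => le_antisymm h2 h1⟩
      refine (fun h1 h2 h3 => List.Perm.eq_of_pairwise' (r := (· ≥ ·)) h2 h3 h1) ?_ ?_ ?_
      · have h0 : (((l : Multiset ℕ).sort (· ≥ ·) : List ℕ) : Multiset ℕ) = (l : Multiset ℕ) :=
          Multiset.sort_eq _ _
        exact Multiset.coe_eq_coe.mp h0
      · apply Multiset.pairwise_sort
      · have hgt : l.Pairwise (· > ·) :=
          List.isChain_iff_pairwise.mp (List.IsChain.imp (fun {a b} h => by omega) hch)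
        exact hgt.imp (fun {a b} h => le_of_lt h)
    refine ⟨⟨(l : Multiset ℕ), fun {x} hx => hpos x hx, hlsum⟩, ?_, ?_⟩
    · rw [Finset.mem_filter]
      refine ⟨Finset.mem_univ _, ?_⟩
      show List.Chain' _ ((l : Multiset ℕ).sort (· ≥ ·))
      rw [hsorted]
      exact hch
    · exact hsorted
  · intro π hπ
    rfl


theorem pb_eq_frob : ∀ m A B : ℕ, Pb m A B = (Frob m A B).card := by
  intro m
  induction m using Nat.strong_induction_on with
  | _ m ih =>
    intro A B
    rcases Nat.eq_zero_or_pos m with rfl | hm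
    · rw [pb_zero, frob_zero]; simp
    · rw [pb_rec hm, frob_rec hm]
      refine Finset.sum_congr rfl fun x hx => Finset.sum_congr rfl fun y hy => ?_
      by_cases h : x + y + 1 ≤ m
      · rw [if_pos h, if_pos h, ih _ (by omega)]
      · rw [if_neg h, if_neg h]

theorem key_identity (m : ℕ) :
    ∑ π ∈ Finset.univ.filter (fun π : Nat.Partition m =>
        List.Chain' (fun a b => b + 2 ≤ a) (π.parts.sort (· ≥ ·))),
      alladiWeight (π.parts.sort (· ≥ ·)) = Fintype.card (Nat.Partition m) := by
  rw [partition_sum_eq, card_partition_eq_pb, pb_eq_frob, frob_fiber]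
  refine Finset.sum_congr rfl fun l hl => ?_
  rw [mem_RRL] at hl
  obtain ⟨h1, h2, h3⟩ := hl
  have hb : ∀ z ∈ l, z ≤ m := fun z hz =>
    h3 ▸ List.single_le_sum (fun y _ => Nat.zero_le y) z hz
  exact (fib_card_eq_weight h1 h2 hb hb).symm

theorem stmt_14 :
    (PowerSeries.mk (fun m =>
        ∑ π ∈ Finset.univ.filter (fun π : Nat.Partition m =>
            List.Chain' (fun a b => b + 2 ≤ a) (π.parts.sort (· ≥ ·))),
          (alladiWeight (π.parts.sort (· ≥ ·)) : ℚ)) : PowerSeries ℚ)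
    = PowerSeries.mk (fun m => (Fintype.card (Nat.Partition m) : ℚ)) := by
  apply PowerSeries.ext
  intro m
  simp only [PowerSeries.coeff_mk]
  rw [← Nat.cast_sum, key_identity m]
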